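/- Let n ≥ 1, let t₀ ∈ ℝ, and let A : ℝ → Matrix (Fin n) ℝ take values in symmetric matrices, be continuously differentiable on a neighborhood of t₀, and be twice differentiable at t₀. Suppose v₁, …, vₙ : ℝ → (Fin n → ℝ) are continuously differentiable on a neighborhood of t₀ and form an orthonormal basis of ℝⁿ for each t near t₀, and κ₁, …, κₙ : ℝ → ℝ satisfy A(t)·vⱼ(t) = κⱼ(t)·vⱼ(t) for all j and all t near t₀. Fix an index i and assume κ_l(t₀) ≠ κ_i(t₀) for every l ≠ i (the eigenvalue κ_i is simple at t₀). Then κ_i is twice differentiable at t₀ and κ_i''(t₀) = ⟨A''(t₀)·v_i(t₀), v_i(t₀)⟩ - 2·∑_{l ≠ i} ⟨A'(t₀)·v_i(t₀), v_l(t₀)⟩² / (κ_l(t₀) - κ_i(t₀)). (This is the pointwise content of formula (2.2) in Lemma 2.3: Δκᵢ = (ΔA)(τᵢ,τᵢ) - 2∑_{l≠i} |(∇A)(τ_l,τᵢ)|²/(κ_l - κᵢ) for a simple eigenvalue of a Codazzi tensor.) -/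

import Mathlib

open Filter Topology Matrix

private lemma hasDerivAt_sum_mul {n : ℕ} {f g : ℝ → Fin n → ℝ} {f' g' : Fin n → ℝ} {t : ℝ}
    (hf : ∀ k, HasDerivAt (fun s => f s k) (f' k) t)
    (hg : ∀ k, HasDerivAt (fun s => g s k) (g' k) t) :
    HasDerivAt (fun s => ∑ k, f s k * g s k)
      (∑ k, (f' k * g t k + f t k * g' k)) t := by
  simpa using HasDerivAt.fun_sum (fun k _ => (hf k).mul (hg k))

private lemma hasDerivAt_quad {n : ℕ} {A : ℝ → Fin n → Fin n → ℝ}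
    {a : Fin n → Fin n → ℝ} {x y : ℝ → Fin n → ℝ} {x' y' : Fin n → ℝ} {t : ℝ}
    (hA : ∀ j k, HasDerivAt (fun s => A s j k) (a j k) t)
    (hx : ∀ k, HasDerivAt (fun s => x s k) (x' k) t)
    (hy : ∀ j, HasDerivAt (fun s => y s j) (y' j) t) :
    HasDerivAt (fun s => ∑ j, (∑ k, A s j k * x s k) * y s j)
      (∑ j, ((∑ k, (a j k * x t k + A t j k * x' k)) * y t j
        + (∑ k, A t j k * x t k) * y' j)) t := by
  exact hasDerivAt_sum_mul
    (f := fun s j => ∑ k, A s j k * x s k)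
    (fun j => hasDerivAt_sum_mul (fun k => hA j k) hx) hy

theorem eigenvalue_second_variation (n : ℕ) (hn : 1 ≤ n) (t₀ : ℝ)
    (A : ℝ → Matrix (Fin n) (Fin n) ℝ) (hsymm : ∀ t, (A t).IsSymm)
    (U : Set ℝ) (hU : U ∈ nhds t₀)
    (hAC1 : ∀ i j, ContDiffOn ℝ 1 (fun t => A t i j) U)
    (A' A'' : Matrix (Fin n) (Fin n) ℝ)
    (hA' : ∀ i j, HasDerivAt (fun t => A t i j) (A' i j) t₀)
    (hA'' : ∀ i j, HasDerivAt (deriv (fun t => A t i j)) (A'' i j) t₀)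
    (v : Fin n → ℝ → Fin n → ℝ)
    (hvC1 : ∀ j i, ContDiffOn ℝ 1 (fun t => v j t i) U)
    (horth : ∀ t ∈ U, ∀ j k : Fin n, v j t ⬝ᵥ v k t = if j = k then (1 : ℝ) else 0)
    (κ : Fin n → ℝ → ℝ)
    (heig : ∀ t ∈ U, ∀ j : Fin n, (A t).mulVec (v j t) = κ j t • v j t)
    (i : Fin n) (hsimple : ∀ l : Fin n, l ≠ i → κ l t₀ ≠ κ i t₀) :
    HasDerivAt (deriv (κ i))
      (A''.mulVec (v i t₀) ⬝ᵥ v i t₀ -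
        2 * ∑ l ∈ Finset.univ.filter (fun l => l ≠ i),
          (A'.mulVec (v i t₀) ⬝ᵥ v l t₀) ^ 2 / (κ l t₀ - κ i t₀)) t₀ := by
  have ht₀U : t₀ ∈ U := mem_of_mem_nhds hU
  set W := interior U with hWdef
  have hWo : IsOpen W := isOpen_interior
  have htW : t₀ ∈ W := mem_interior_iff_mem_nhds.mpr hU
  have hWU : W ⊆ U := interior_subset
  have hWnhds : ∀ t ∈ W, W ∈ 𝓝 t := fun t ht => hWo.mem_nhds ht
  have hUnhds : ∀ t ∈ W, U ∈ 𝓝 t := fun t ht =>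
    Filter.mem_of_superset (hWnhds t ht) hWU
  -- pointwise symmetry
  have hS : ∀ t (j k : Fin n), A t j k = A t k j := fun t j k => ((hsymm t).apply k j)
  -- differentiability of entries
  have hvd : ∀ (j k : Fin n) (t : ℝ), t ∈ W →
      HasDerivAt (fun s => v j s k) (deriv (fun s => v j s k) t) t := by
    intro j k t ht
    exact (((hvC1 j k).differentiableOn one_ne_zero).differentiableAt (hUnhds t ht)).hasDerivAt
  have hAd : ∀ (j k : Fin n) (t : ℝ), t ∈ W →
      HasDerivAt (fun s => A s j k) (deriv (fun s => A s j k) t) t := by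
    intro j k t ht
    exact (((hAC1 j k).differentiableOn one_ne_zero).differentiableAt (hUnhds t ht)).hasDerivAt
  -- componentwise eigen equation
  have heigc : ∀ t ∈ U, ∀ (j m : Fin n), (∑ k, A t j k * v m t k) = κ m t * v m t j := by
    intro t ht j m
    have := congrFun (heig t ht m) j
    simpa [Matrix.mulVec, dotProduct] using this
  -- componentwise orthonormality
  have horthc : ∀ t ∈ U, ∀ (j m : Fin n),
      (∑ k, v j t k * v m t k) = if j = m then (1:ℝ) else 0 := by
    intro t ht j m
    simpa [dotProduct] using horth t ht j m
  -- self derivative orthogonality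
  have hself : ∀ (j : Fin n) (t : ℝ), t ∈ W →
      (∑ k, deriv (fun s => v j s k) t * v j t k) = 0 := by
    intro j t ht
    have hD : HasDerivAt (fun s => ∑ k, v j s k * v j s k)
        (∑ k, (deriv (fun s => v j s k) t * v j t k
          + v j t k * deriv (fun s => v j s k) t)) t :=
      hasDerivAt_sum_mul (fun k => hvd j k t ht) (fun k => hvd j k t ht)
    have heq : (fun s => ∑ k, v j s k * v j s k) =ᶠ[𝓝 t] fun _ => (1:ℝ) := by
      filter_upwards [hUnhds t ht] with s hs
      simpa using horthc s hs j j
    have h0 : HasDerivAt (fun s => ∑ k, v j s k * v j s k) 0 t :=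
      (hasDerivAt_const t (1:ℝ)).congr_of_eventuallyEq heq
    have huniq := hD.unique h0
    have h2 : (∑ k, (deriv (fun s => v j s k) t * v j t k
        + v j t k * deriv (fun s => v j s k) t))
        = 2 * ∑ k, deriv (fun s => v j s k) t * v j t k := by
      rw [Finset.mul_sum]
      exact Finset.sum_congr rfl (fun k _ => by ring)
    rw [h2] at huniq
    linarith
  -- G : candidate for deriv (κ i)
  set G : ℝ → ℝ := fun t => ∑ j, (∑ k, deriv (fun s => A s j k) t * v i t k) * v i t j
    with hGdef
  -- Step A: F has derivative G t on W
  have hFG : ∀ t ∈ W, HasDerivAt (fun s => ∑ j, (∑ k, A s j k * v i s k) * v i s j) (G t) t := by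
    intro t ht
    have hD := hasDerivAt_quad (A := fun s j k => A s j k)
      (fun j k => hAd j k t ht) (fun k => hvd i k t ht) (fun j => hvd i j t ht)
    have hSzero : (∑ k, deriv (fun s => v i s k) t * v i t k) = 0 := hself i t ht
    have hT2 : (∑ j, (∑ k, A t j k * v i t k) * deriv (fun s => v i s j) t) = 0 := by
      calc (∑ j, (∑ k, A t j k * v i t k) * deriv (fun s => v i s j) t)
          = ∑ j, κ i t * (deriv (fun s => v i s j) t * v i t j) := by
            refine Finset.sum_congr rfl fun j _ => ?_
            rw [heigc t (hWU ht) j i]; ring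
        _ = κ i t * ∑ j, deriv (fun s => v i s j) t * v i t j := by rw [Finset.mul_sum]
        _ = 0 := by rw [hSzero, mul_zero]
    have hT1 : (∑ j, (∑ k, A t j k * deriv (fun s => v i s k) t) * v i t j) = 0 := by
      calc (∑ j, (∑ k, A t j k * deriv (fun s => v i s k) t) * v i t j)
          = ∑ j, ∑ k, A t k j * v i t j * deriv (fun s => v i s k) t := by
            refine Finset.sum_congr rfl fun j _ => ?_
            rw [Finset.sum_mul]
            refine Finset.sum_congr rfl fun k _ => ?_
            rw [hS t j k]; ring
        _ = ∑ k, (∑ j, A t k j * v i t j) * deriv (fun s => v i s k) t := by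
            rw [Finset.sum_comm]
            exact Finset.sum_congr rfl fun k _ => (Finset.sum_mul _ _ _).symm
        _ = ∑ k, κ i t * (deriv (fun s => v i s k) t * v i t k) := by
            refine Finset.sum_congr rfl fun k _ => ?_
            rw [heigc t (hWU ht) k i]; ring
        _ = 0 := by rw [← Finset.mul_sum, hSzero, mul_zero]
    have hval : (∑ j, ((∑ k, (deriv (fun s => A s j k) t * v i t k
          + A t j k * deriv (fun s => v i s k) t)) * v i t j
          + (∑ k, A t j k * v i t k) * deriv (fun s => v i s j) t)) = G t := by
      have expand : ∀ j : Fin n,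
          ((∑ k, (deriv (fun s => A s j k) t * v i t k
            + A t j k * deriv (fun s => v i s k) t)) * v i t j
            + (∑ k, A t j k * v i t k) * deriv (fun s => v i s j) t)
          = (∑ k, deriv (fun s => A s j k) t * v i t k) * v i t j
            + ((∑ k, A t j k * deriv (fun s => v i s k) t) * v i t j
            + (∑ k, A t j k * v i t k) * deriv (fun s => v i s j) t) := by
        intro j
        rw [Finset.sum_add_distrib]; ring
      rw [Finset.sum_congr rfl (fun j _ => expand j), Finset.sum_add_distrib,
        Finset.sum_add_distrib, hT1, hT2, hGdef]
      ring
    rw [hval] at hD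
    exact hD
  -- κ i equals F eventually
  have hκF : κ i =ᶠ[𝓝 t₀] (fun t => ∑ j, (∑ k, A t j k * v i t k) * v i t j) := by
    filter_upwards [hU] with t ht
    have : (∑ j, (∑ k, A t j k * v i t k) * v i t j)
        = κ i t * ∑ j, v i t j * v i t j := by
      rw [Finset.mul_sum]
      refine Finset.sum_congr rfl fun j _ => ?_
      rw [heigc t ht j i]; ring
    rw [this, horthc t ht i i]
    simp
  -- deriv (κ i) =ᶠ G
  have hderiv_eq : deriv (κ i) =ᶠ[𝓝 t₀] G := by
    refine (hκF.deriv).trans ?_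
    filter_upwards [hWo.mem_nhds htW] with t ht
    exact (hFG t ht).deriv
  -- Derivative data at t₀
  set u : Fin n → ℝ := fun k => deriv (fun s => v i s k) t₀ with hudef
  have hvd0 : ∀ (j k : Fin n),
      HasDerivAt (fun s => v j s k) (deriv (fun s => v j s k) t₀) t₀ :=
    fun j k => hvd j k t₀ htW
  -- Step B: derivative of G at t₀
  have hGd : HasDerivAt G
      (∑ j, ((∑ k, (A'' j k * v i t₀ k + A' j k * u k)) * v i t₀ j
        + (∑ k, A' j k * v i t₀ k) * u j)) t₀ := by
    have hD := hasDerivAt_quad (A := fun s j k => deriv (fun r => A r j k) s)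
      (a := fun j k => A'' j k) (fun j k => hA'' j k) (fun k => hvd0 i k) (fun j => hvd0 i j)
    have hrw : ∀ j k : Fin n, deriv (fun r => A r j k) t₀ = A' j k :=
      fun j k => (hA' j k).deriv
    simp only [hrw] at hD
    exact hD
  -- symmetry of A'
  have hS' : ∀ j k : Fin n, A' j k = A' k j := by
    intro j k
    refine (hA' j k).unique ?_
    have : (fun t => A t j k) = fun t => A t k j := funext fun t => hS t j k
    rw [this]
    exact hA' k j
  -- completeness: ∑ l, v l t₀ j * v l t₀ k = δ jk
  have hcomp : ∀ j k : Fin n, (∑ l, v l t₀ j * v l t₀ k) = if j = k then (1:ℝ) else 0 := by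
    intro j k
    have hM : (Matrix.of fun l m => v l t₀ m) * (Matrix.of fun l m => v l t₀ m)ᵀ = 1 := by
      ext a b
      simp only [Matrix.mul_apply, Matrix.of_apply, Matrix.transpose_apply, Matrix.one_apply]
      exact horthc t₀ ht₀U a b
    have hM' := mul_eq_one_comm.mp hM
    have := congrFun (congrFun hM' j) k
    simpa [Matrix.mul_apply, Matrix.one_apply] using this
  -- expansion identity
  have hexpand : ∀ a b : Fin n → ℝ,
      (∑ j, a j * b j) = ∑ l, (∑ j, a j * v l t₀ j) * (∑ k, b k * v l t₀ k) := by
    intro a b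
    have : ∀ l, (∑ j, a j * v l t₀ j) * (∑ k, b k * v l t₀ k)
        = ∑ j, ∑ k, a j * b k * (v l t₀ j * v l t₀ k) := by
      intro l
      rw [Finset.sum_mul_sum]
      exact Finset.sum_congr rfl fun j _ => Finset.sum_congr rfl fun k _ => by ring
    rw [Finset.sum_congr rfl fun l _ => this l, Finset.sum_comm]
    refine (Finset.sum_congr rfl fun j _ => ?_).symm
    rw [Finset.sum_comm]
    have : ∀ k : Fin n, (∑ l, a j * b k * (v l t₀ j * v l t₀ k))
        = a j * b k * (if j = k then (1:ℝ) else 0) := by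
      intro k
      rw [← Finset.mul_sum, hcomp j k]
    rw [Finset.sum_congr rfl fun k _ => this k]
    simp
  -- coefficients c l
  set c : Fin n → ℝ := fun l => ∑ k, u k * v l t₀ k with hcdef
  have hci : c i = 0 := hself i t₀ htW
  -- e l = ⟨A' v_i, v_l⟩
  set e : Fin n → ℝ := fun l => ∑ j, (∑ k, A' j k * v i t₀ k) * v l t₀ j with hedef
  -- cross relations for l ≠ i
  have hcl : ∀ l : Fin n, l ≠ i → c l = - e l / (κ l t₀ - κ i t₀) := by
    intro l hl
    -- Q relation
    have hQd : HasDerivAt (fun s => ∑ k, v i s k * v l s k)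
        (∑ k, (u k * v l t₀ k + v i t₀ k * deriv (fun s => v l s k) t₀)) t₀ :=
      hasDerivAt_sum_mul (fun k => hvd0 i k) (fun k => hvd0 l k)
    have hQ0 : HasDerivAt (fun s => ∑ k, v i s k * v l s k) 0 t₀ := by
      refine (hasDerivAt_const t₀ (0:ℝ)).congr_of_eventuallyEq ?_
      filter_upwards [hU] with s hs
      have := horthc s hs i l
      simpa [(Ne.symm hl : ¬ i = l)] using this
    have hQ : c l + (∑ k, v i t₀ k * deriv (fun s => v l s k) t₀) = 0 := by
      have := hQd.unique hQ0
      rw [Finset.sum_add_distrib] at this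
      exact this
    -- P relation
    have hPd : HasDerivAt (fun s => ∑ j, (∑ k, A s j k * v i s k) * v l s j)
        (∑ j, ((∑ k, (A' j k * v i t₀ k + A t₀ j k * u k)) * v l t₀ j
          + (∑ k, A t₀ j k * v i t₀ k) * deriv (fun s => v l s j) t₀)) t₀ :=
      hasDerivAt_quad (fun j k => hA' j k) (fun k => hvd0 i k) (fun j => hvd0 l j)
    have hP0 : HasDerivAt (fun s => ∑ j, (∑ k, A s j k * v i s k) * v l s j) 0 t₀ := by
      refine (hasDerivAt_const t₀ (0:ℝ)).congr_of_eventuallyEq ?_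
      filter_upwards [hU] with s hs
      have : (∑ j, (∑ k, A s j k * v i s k) * v l s j)
          = κ i s * ∑ j, v i s j * v l s j := by
        rw [Finset.mul_sum]
        refine Finset.sum_congr rfl fun j _ => ?_
        rw [heigc s hs j i]; ring
      rw [this, horthc s hs i l]
      simp [(Ne.symm hl : ¬ i = l)]
    have hPuniq := hPd.unique hP0
    -- simplify hPuniq
    have hmid : (∑ j, (∑ k, A t₀ j k * u k) * v l t₀ j) = κ l t₀ * c l := by
      calc (∑ j, (∑ k, A t₀ j k * u k) * v l t₀ j)
          = ∑ j, ∑ k, A t₀ k j * v l t₀ j * u k := by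
            refine Finset.sum_congr rfl fun j _ => ?_
            rw [Finset.sum_mul]
            refine Finset.sum_congr rfl fun k _ => ?_
            rw [hS t₀ j k]; ring
        _ = ∑ k, (∑ j, A t₀ k j * v l t₀ j) * u k := by
            rw [Finset.sum_comm]
            exact Finset.sum_congr rfl fun k _ => (Finset.sum_mul _ _ _).symm
        _ = ∑ k, κ l t₀ * (u k * v l t₀ k) := by
            refine Finset.sum_congr rfl fun k _ => ?_
            rw [heigc t₀ ht₀U k l]; ring
        _ = κ l t₀ * c l := by rw [← Finset.mul_sum, hcdef]
    have hthird : (∑ j, (∑ k, A t₀ j k * v i t₀ k) * deriv (fun s => v l s j) t₀)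
        = - (κ i t₀ * c l) := by
      calc (∑ j, (∑ k, A t₀ j k * v i t₀ k) * deriv (fun s => v l s j) t₀)
          = ∑ j, κ i t₀ * (v i t₀ j * deriv (fun s => v l s j) t₀) := by
            refine Finset.sum_congr rfl fun j _ => ?_
            rw [heigc t₀ ht₀U j i]; ring
        _ = κ i t₀ * ∑ j, v i t₀ j * deriv (fun s => v l s j) t₀ := by rw [Finset.mul_sum]
        _ = - (κ i t₀ * c l) := by
            have : (∑ j, v i t₀ j * deriv (fun s => v l s j) t₀) = - c l := by linarith [hQ]
            rw [this]; ring
    have hsplit : (∑ j, ((∑ k, (A' j k * v i t₀ k + A t₀ j k * u k)) * v l t₀ j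
          + (∑ k, A t₀ j k * v i t₀ k) * deriv (fun s => v l s j) t₀))
        = e l + (∑ j, (∑ k, A t₀ j k * u k) * v l t₀ j)
          + (∑ j, (∑ k, A t₀ j k * v i t₀ k) * deriv (fun s => v l s j) t₀) := by
      have expand : ∀ j : Fin n,
          ((∑ k, (A' j k * v i t₀ k + A t₀ j k * u k)) * v l t₀ j
            + (∑ k, A t₀ j k * v i t₀ k) * deriv (fun s => v l s j) t₀)
          = ((∑ k, A' j k * v i t₀ k) * v l t₀ j
            + (∑ k, A t₀ j k * u k) * v l t₀ j)
            + (∑ k, A t₀ j k * v i t₀ k) * deriv (fun s => v l s j) t₀ := by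
        intro j
        rw [Finset.sum_add_distrib]; ring
      rw [Finset.sum_congr rfl fun j _ => expand j, Finset.sum_add_distrib,
        Finset.sum_add_distrib, hedef]
    rw [hsplit, hmid, hthird] at hPuniq
    have hne : κ l t₀ - κ i t₀ ≠ 0 := sub_ne_zero.mpr (hsimple l hl)
    field_simp
    linarith [hPuniq]
  -- the inner product ⟨A' v, u⟩
  have hAu : (∑ j, (∑ k, A' j k * v i t₀ k) * u j)
      = - ∑ l ∈ Finset.univ.filter (fun l => l ≠ i), e l ^ 2 / (κ l t₀ - κ i t₀) := by
    have h1 : (∑ j, (∑ k, A' j k * v i t₀ k) * u j) = ∑ l, e l * c l := by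
      rw [hexpand (fun j => ∑ k, A' j k * v i t₀ k) u]
    have h2 : ∀ l : Fin n, e l * c l
        = if l ≠ i then -(e l ^ 2 / (κ l t₀ - κ i t₀)) else 0 := by
      intro l
      by_cases h : l = i
      · simp [h, hci]
      · rw [if_pos h, hcl l h]
        ring
    rw [h1, Finset.sum_congr rfl fun l _ => h2 l, Finset.sum_filter,
      ← Finset.sum_neg_distrib]
    refine Finset.sum_congr rfl fun l _ => ?_
    by_cases h : l = i <;> simp [h]
  -- symmetry swap for the middle term of G'
  have hswap : (∑ j, (∑ k, A' j k * u k) * v i t₀ j)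
      = ∑ j, (∑ k, A' j k * v i t₀ k) * u j := by
    calc (∑ j, (∑ k, A' j k * u k) * v i t₀ j)
        = ∑ j, ∑ k, A' k j * v i t₀ j * u k := by
          refine Finset.sum_congr rfl fun j _ => ?_
          rw [Finset.sum_mul]
          refine Finset.sum_congr rfl fun k _ => ?_
          rw [hS' j k]; ring
      _ = ∑ k, (∑ j, A' k j * v i t₀ j) * u k := by
          rw [Finset.sum_comm]
          exact Finset.sum_congr rfl fun k _ => (Finset.sum_mul _ _ _).symm
  -- final value computation
  have hval : (∑ j, ((∑ k, (A'' j k * v i t₀ k + A' j k * u k)) * v i t₀ j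
        + (∑ k, A' j k * v i t₀ k) * u j))
      = A''.mulVec (v i t₀) ⬝ᵥ v i t₀ -
        2 * ∑ l ∈ Finset.univ.filter (fun l => l ≠ i),
          (A'.mulVec (v i t₀) ⬝ᵥ v l t₀) ^ 2 / (κ l t₀ - κ i t₀) := by
    have expand : ∀ j : Fin n,
        ((∑ k, (A'' j k * v i t₀ k + A' j k * u k)) * v i t₀ j
          + (∑ k, A' j k * v i t₀ k) * u j)
        = ((∑ k, A'' j k * v i t₀ k) * v i t₀ j
          + (∑ k, A' j k * u k) * v i t₀ j)
          + (∑ k, A' j k * v i t₀ k) * u j := by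
      intro j
      rw [Finset.sum_add_distrib]; ring
    rw [Finset.sum_congr rfl fun j _ => expand j, Finset.sum_add_distrib,
      Finset.sum_add_distrib, hswap, hAu]
    have h1 : A''.mulVec (v i t₀) ⬝ᵥ v i t₀ = ∑ j, (∑ k, A'' j k * v i t₀ k) * v i t₀ j := by
      simp [Matrix.mulVec, dotProduct]
    have h2 : ∀ l, A'.mulVec (v i t₀) ⬝ᵥ v l t₀ = e l := by
      intro l
      simp [Matrix.mulVec, dotProduct, hedef]
    rw [h1]
    have h3 : (∑ l ∈ Finset.univ.filter (fun l => l ≠ i),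
        (A'.mulVec (v i t₀) ⬝ᵥ v l t₀) ^ 2 / (κ l t₀ - κ i t₀))
        = ∑ l ∈ Finset.univ.filter (fun l => l ≠ i), e l ^ 2 / (κ l t₀ - κ i t₀) := by
      exact Finset.sum_congr rfl fun l _ => by rw [h2 l]
    rw [h3]
    ring
  rw [hval] at hGd
  exact hGd.congr_of_eventuallyEq hderiv_eq
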